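/- Separation bound for low-rank approximation of Cauchy matrices: suppose the sets S = {s_0,…,s_{n-1}} and T = {t_0,…,t_{n-1}} are (θ,c)-separated, i.e., |t_j − c| ≤ θ |s_i − c| for all i,j with 0 < θ < 1, and let δ = min_i |s_i − c| > 0. Then for every positive integer k, the matrix Ĉ with entries Ĉ_{i,j} = Σ_{h=0}^{k} (t_j − c)^h / (s_i − c)^{h+1} has rank at most k+1 and satisfies |1/(s_i − t_j) − Ĉ_{i,j}| ≤ θ^{k+1} / ((1 − θ) δ) for all i, j. -/

import Mathlib

open Matrix Finset

theorem cauchy_low_rank_approximation (n : ℕ) (s t : Fin n → ℂ) (c : ℂ)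
    (θ δ : ℝ) (hθ0 : 0 < θ) (hθ1 : θ < 1)
    (hsep : ∀ i j, ‖t j - c‖ ≤ θ * ‖s i - c‖)
    (hδ : ∀ i, δ ≤ ‖s i - c‖) (hδ0 : 0 < δ)
    (k : ℕ) (hk : 0 < k)
    (Chat : Matrix (Fin n) (Fin n) ℂ)
    (hChat : ∀ i j, Chat i j =
      ∑ h ∈ Finset.range (k + 1), (t j - c) ^ h / (s i - c) ^ (h + 1)) :
    Chat.rank ≤ k + 1 ∧
      ∀ i j, ‖1 / (s i - t j) - Chat i j‖ ≤
        θ ^ (k + 1) / ((1 - θ) * δ) := by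
  constructor
  · have hF : Chat = (Matrix.of fun i (h : Fin (k+1)) => (1 / (s i - c) ^ ((h : ℕ) + 1))) *
        (Matrix.of fun (h : Fin (k+1)) j => (t j - c) ^ (h : ℕ)) := by
      ext i j
      rw [hChat, Matrix.mul_apply]
      rw [← Fin.sum_univ_eq_sum_range (fun h => (t j - c) ^ h / (s i - c) ^ (h + 1)) (k+1)]
      apply Finset.sum_congr rfl
      intro h _
      simp [div_eq_mul_inv, mul_comm]
    rw [hF]
    refine le_trans (Matrix.rank_mul_le_left _ _) ?_
    simpa using Matrix.rank_le_card_width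
      (Matrix.of fun i (h : Fin (k+1)) => (1 / (s i - c) ^ ((h : ℕ) + 1)))
  · intro i j
    set a := s i - c with ha
    set b := t j - c with hb
    have haδ : δ ≤ ‖a‖ := hδ i
    have ha0 : a ≠ 0 := by
      intro h; rw [h] at haδ; simp at haδ; linarith
    set r := b / a with hr
    have hrθ : ‖r‖ ≤ θ := by
      rw [hr, norm_div, div_le_iff₀ (lt_of_lt_of_le hδ0 haδ)]
      exact hsep i j
    have hrabs1 : ‖r‖ < 1 := lt_of_le_of_lt hrθ hθ1
    have hr1 : (1 : ℂ) - r ≠ 0 := by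
      intro h
      have : r = 1 := by linear_combination -h
      rw [this] at hrabs1; simp at hrabs1
    have h1r : 1 - θ ≤ ‖1 - r‖ := by
      have := norm_sub_norm_le (1 : ℂ) r
      simp only [norm_one] at this
      linarith
    have hst : s i - t j = a * (1 - r) := by
      field_simp [hr]
      rw [hr, mul_sub, mul_one, mul_div_assoc', mul_div_cancel_left₀ b ha0, ha, hb]; ring
    have hsum : Chat i j = (1 - r ^ (k+1)) / ((1 - r) * a) := by
      rw [hChat]
      have key : ∀ h ∈ Finset.range (k+1), b ^ h / a ^ (h+1) = r ^ h * (1/a) := by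
        intro h _
        rw [hr, div_pow, div_mul_div_comm, mul_one, ← pow_succ]
      rw [Finset.sum_congr rfl key, ← Finset.sum_mul, geom_sum_eq (by
        intro h; exact hr1 (by rw [h]; ring)) (k+1)]
      have hr1' : r - 1 ≠ 0 := fun h => hr1 (by linear_combination -h)
      field_simp
      ring
    have hdiff : 1 / (s i - t j) - Chat i j = r ^ (k+1) / ((1 - r) * a) := by
      rw [hsum, hst]
      field_simp
      ring
    rw [hdiff, norm_div, norm_pow, norm_mul]
    have h1 : ‖r‖ ^ (k+1) ≤ θ ^ (k+1) :=
      pow_le_pow_left₀ (norm_nonneg _) hrθ _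
    have h2 : (1 - θ) * δ ≤ ‖1 - r‖ * ‖a‖ :=
      mul_le_mul h1r haδ (le_of_lt hδ0) (norm_nonneg _)
    exact div_le_div₀ (by positivity) h1 (mul_pos (by linarith) hδ0) h2
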